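/- For k > 1 and n ∈ ℤ, the Fourier coefficients F̄_n = ∫_𝕋 (dz/2πiz) z^{-n} (1/S(z)) of the reciprocal scattering function 1/S(z) = (1 - k^{-1}z^{-1})^{1/2}(1 - k^{-1}z)^{1/2} are F̄_n = -[Γ(|n|-1/2)/(2√π · |n|!)] · k^{-|n|} · ₂F₁(-1/2, |n|-1/2; |n|+1; k^{-2}). -/

import Mathlib

open Real intervalIntegral

/-- The Gauss hypergeometric function `₂F₁(a,b;c;t)` as a power series. -/
noncomputable def gaussHyp (a b c t : ℝ) : ℝ :=
  ∑' n : ℕ, ((ascPochhammer ℝ n).eval a * (ascPochhammer ℝ n).eval b /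
    (ascPochhammer ℝ n).eval c) * t ^ n / (n.factorial : ℝ)


section AuxLemmas

open MeasureTheory
open scoped ENNReal NNReal

/-- Coefficients of the binomial series for `(1-w)^{1/2}`. -/
noncomputable def bc (m : ℕ) : ℝ := (ascPochhammer ℝ m).eval (-(1/2)) / m.factorial

lemma bc_zero : bc 0 = 1 := by simp [bc]

lemma bc_rec (m : ℕ) : ((m : ℝ) + 1) * bc (m+1) = ((m : ℝ) - 1/2) * bc m := by
  have h1 : (m.factorial : ℝ) ≠ 0 := Nat.cast_ne_zero.2 m.factorial_ne_zero
  simp only [bc, ascPochhammer_succ_eval, Nat.factorial_succ, Nat.cast_mul, Nat.cast_add,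
    Nat.cast_one]
  field_simp
  ring

lemma bc_abs (m : ℕ) : |bc m| ≤ 1 := by
  induction m with
  | zero => simp [bc_zero]
  | succ m ih =>
    have hm1 : (0:ℝ) < (m:ℝ) + 1 := by positivity
    have h := bc_rec m
    have : bc (m+1) = ((m : ℝ) - 1/2) / ((m:ℝ)+1) * bc m := by
      field_simp at h ⊢; linarith [h]
    rw [this, abs_mul, abs_div]
    have h2 : |(m:ℝ) - 1/2| ≤ (m:ℝ) + 1 := by
      rw [abs_le]; constructor <;> [linarith [Nat.cast_nonneg (α := ℝ) m]; linarith]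
    have h3 : |(m:ℝ) - 1/2| / |(m:ℝ)+1| ≤ 1 := by
      rw [abs_of_pos hm1, div_le_one hm1]; exact h2
    calc |(m:ℝ) - 1/2| / |(m:ℝ)+1| * |bc m| ≤ 1 * 1 :=
      mul_le_mul h3 ih (abs_nonneg _) zero_le_one
    _ = 1 := one_mul 1

lemma bc_summable {w : ℂ} (hw : ‖w‖ < 1) : Summable fun m => ‖(bc m : ℂ) * w ^ m‖ := by
  refine Summable.of_nonneg_of_le (fun m => norm_nonneg _) (fun m => ?_)
    (summable_geometric_of_lt_one (norm_nonneg w) hw)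
  rw [norm_mul, norm_pow]
  calc ‖(bc m : ℂ)‖ * ‖w‖ ^ m ≤ 1 * ‖w‖ ^ m := by
        apply mul_le_mul_of_nonneg_right _ (by positivity)
        rw [Complex.norm_real, Real.norm_eq_abs]; exact bc_abs m
    _ = ‖w‖ ^ m := one_mul _

lemma bc_deriv_summable {r : ℝ} (hr0 : 0 ≤ r) (hr : r < 1) :
    Summable fun m : ℕ => (m : ℝ) * r ^ (m - 1) := by
  have h1 : Summable fun m : ℕ => (m : ℝ) * r ^ m := by
    simpa using summable_pow_mul_geometric_of_norm_lt_one 1 (by rwa [Real.norm_eq_abs, abs_of_nonneg hr0])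
  have h2 : Summable (fun m : ℕ => ((m + 1 : ℕ) : ℝ) * r ^ (m + 1 - 1)) := by
    simp only [Nat.add_sub_cancel, Nat.cast_add, Nat.cast_one]
    simpa [add_mul, one_mul] using h1.add (summable_geometric_of_lt_one hr0 hr)
  exact (summable_nat_add_iff (f := fun m : ℕ => (m : ℝ) * r ^ (m - 1)) 1).1 h2

lemma bc_rec' (m : ℕ) : ((m : ℂ) + 1) * (bc (m+1) : ℂ) = ((m : ℂ) - 1/2) * (bc m : ℂ) := by
  have := bc_rec m
  have h2 : ((((m : ℝ) + 1) * bc (m+1) : ℝ) : ℂ) = ((((m : ℝ) - 1/2) * bc m : ℝ) : ℂ) := by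
    rw [this]
  push_cast at h2
  exact_mod_cast h2

lemma bc_hasSum {w : ℂ} (hw : ‖w‖ < 1) :
    HasSum (fun m => (bc m : ℂ) * w ^ m) ((1 - w) ^ ((1:ℂ)/2)) := by
  classical
  set r : ℝ := (‖w‖ + 1) / 2 with hr_def
  have hr0 : 0 < r := by positivity
  have hwr : ‖w‖ < r := by rw [hr_def]; linarith
  have hr1 : r < 1 := by rw [hr_def]; linarith
  set s : Set ℂ := Metric.ball (0:ℂ) r with hs_def
  have hs_open : IsOpen s := Metric.isOpen_ball
  have hs_conv : Convex ℝ s := convex_ball 0 r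
  have hs_conn : IsPreconnected s := hs_conv.isPreconnected
  have hmem : ∀ z ∈ s, ‖z‖ < r := by
    intro z hz; simpa [hs_def, Metric.mem_ball, dist_zero_right] using hz
  have h0s : (0:ℂ) ∈ s := by simp [hs_def, Metric.mem_ball, hr0]
  have hws : w ∈ s := by simp [hs_def, Metric.mem_ball, dist_zero_right]; exact hwr
  set f : ℂ → ℂ := fun z => ∑' m, (bc m : ℂ) * z ^ m with hf_def
  set D : ℂ → ℂ := fun z => ∑' m, (bc m : ℂ) * ((m : ℂ) * z ^ (m - 1)) with hD_def
  have hfz : ∀ z : ℂ, f z = ∑' m, (bc m : ℂ) * z ^ m := fun _ => rfl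
  have hDz : ∀ z : ℂ, D z = ∑' m, (bc m : ℂ) * ((m : ℂ) * z ^ (m - 1)) := fun _ => rfl
  -- summability facts
  have hSf : ∀ z : ℂ, ‖z‖ < 1 → Summable fun m => (bc m : ℂ) * z ^ m :=
    fun z hz => (bc_summable hz).of_norm
  have hbound : ∀ (m : ℕ), ∀ z ∈ s, ‖(bc m : ℂ) * ((m : ℂ) * z ^ (m - 1))‖ ≤ (m : ℝ) * r ^ (m - 1) := by
    intro m z hz
    rw [norm_mul, norm_mul, norm_pow, Complex.norm_natCast]
    calc ‖(bc m : ℂ)‖ * ((m : ℝ) * ‖z‖ ^ (m-1)) ≤ 1 * ((m : ℝ) * r ^ (m-1)) := by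
          apply mul_le_mul
          · rw [Complex.norm_real, Real.norm_eq_abs]; exact bc_abs m
          · exact mul_le_mul_of_nonneg_left
              (pow_le_pow_left₀ (norm_nonneg z) (le_of_lt (hmem z hz)) _) (Nat.cast_nonneg m)
          · positivity
          · exact zero_le_one
      _ = (m : ℝ) * r ^ (m - 1) := one_mul _
  have hu := bc_deriv_summable (le_of_lt hr0) hr1
  have hterm : ∀ (m : ℕ) (z : ℂ), HasDerivAt (fun z : ℂ => (bc m : ℂ) * z ^ m)
      ((bc m : ℂ) * ((m : ℂ) * z ^ (m - 1))) z := fun m z => (hasDerivAt_pow m z).const_mul _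
  have hfd : ∀ z ∈ s, HasDerivAt f (D z) z := by
    intro z hz
    exact hasDerivAt_tsum_of_isPreconnected hu hs_open hs_conn
      (fun m y _ => hterm m y) hbound h0s (hSf 0 (by simp)) hz
  have hSD : ∀ z ∈ s, Summable fun m => (bc m : ℂ) * ((m : ℂ) * z ^ (m - 1)) := by
    intro z hz
    exact Summable.of_norm_bounded hu (fun m => hbound m z hz)
  -- the ODE
  have hODE : ∀ z ∈ s, (1 - z) * D z + (1/2) * f z = 0 := by
    intro z hz
    have hz1 : ‖z‖ < 1 := lt_trans (hmem z hz) hr1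
    have S1 : Summable fun m => (bc m : ℂ) * ((m : ℂ) * z ^ (m - 1)) := hSD z hz
    have S1' : Summable fun m : ℕ => (bc (m+1) : ℂ) * (((m:ℕ)+1 : ℂ) * z ^ m) := by
      have := (summable_nat_add_iff 1).2 S1
      simpa using this
    have S2 : Summable fun m : ℕ => (bc m : ℂ) * (m : ℂ) * z ^ m := by
      apply Summable.of_norm
      apply Summable.of_nonneg_of_le (fun m => norm_nonneg _) (fun m => ?_)
        (summable_pow_mul_geometric_of_norm_lt_one (R := ℝ) (k := 1) (r := ‖z‖) (by rwa [norm_norm]))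
      rw [norm_mul, norm_mul, norm_pow, Complex.norm_natCast]
      have h1 : ‖(bc m : ℂ)‖ ≤ 1 := by rw [Complex.norm_real, Real.norm_eq_abs]; exact bc_abs m
      calc ‖(bc m : ℂ)‖ * (m:ℝ) * ‖z‖ ^ m ≤ 1 * (m:ℝ) * ‖z‖ ^ m := by
            apply mul_le_mul_of_nonneg_right (mul_le_mul_of_nonneg_right h1 (Nat.cast_nonneg m))
              (by positivity)
        _ = (m:ℝ) ^ 1 * ‖z‖ ^ m := by ring
    have S3 : Summable fun m => (bc m : ℂ) * z ^ m := hSf z hz1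
    -- rewrite D z
    have hD1 : D z = ∑' m : ℕ, (bc (m+1) : ℂ) * (((m:ℕ)+1 : ℂ) * z ^ m) := by
      rw [hDz z, Summable.tsum_eq_zero_add S1]
      simp
    have hzD : z * D z = ∑' m : ℕ, (bc m : ℂ) * (m : ℂ) * z ^ m := by
      rw [hDz z, ← tsum_mul_left]
      apply tsum_congr
      intro m
      cases m with
      | zero => simp
      | succ j => simp only [Nat.add_sub_cancel]; push_cast; ring
    have key : (fun m : ℕ => (bc (m+1) : ℂ) * (((m:ℕ)+1 : ℂ) * z ^ m)
        - (bc m : ℂ) * (m : ℂ) * z ^ m + (1/2) * ((bc m : ℂ) * z ^ m)) = fun _ => 0 := by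
      funext m
      have h := bc_rec' m
      push_cast
      linear_combination z ^ m * h
    calc (1 - z) * D z + (1/2) * f z
        = (D z - z * D z) + (1/2) * f z := by ring
      _ = (∑' m : ℕ, (bc (m+1) : ℂ) * (((m:ℕ)+1 : ℂ) * z ^ m)
            - ∑' m : ℕ, (bc m : ℂ) * (m : ℂ) * z ^ m)
          + ∑' m : ℕ, (1/2) * ((bc m : ℂ) * z ^ m) := by
          rw [hzD, hD1, hfz z, tsum_mul_left]
      _ = ∑' m : ℕ, ((bc (m+1) : ℂ) * (((m:ℕ)+1 : ℂ) * z ^ m)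
            - (bc m : ℂ) * (m : ℂ) * z ^ m + (1/2) * ((bc m : ℂ) * z ^ m)) := by
          rw [← Summable.tsum_sub S1' S2, ← Summable.tsum_add (S1'.sub S2) (S3.mul_left _)]
      _ = 0 := by rw [key]; exact tsum_zero
  -- slit plane facts
  have hslit : ∀ z ∈ s, (1 - z) ∈ Complex.slitPlane := by
    intro z hz
    apply Or.inl
    have : z.re ≤ ‖z‖ := Complex.re_le_norm z
    have := hmem z hz
    simp only [Complex.sub_re, Complex.one_re]
    linarith
  have hne : ∀ z ∈ s, (1 : ℂ) - z ≠ 0 := fun z hz => Complex.slitPlane_ne_zero (hslit z hz)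
  -- derivative of F is zero
  set F : ℂ → ℂ := fun z => f z * (1 - z) ^ (-(1/2) : ℂ) with hF_def
  have hFd : ∀ z ∈ s, HasDerivAt F 0 z := by
    intro z hz
    have hg : HasDerivAt (fun z : ℂ => (1 - z) ^ (-(1/2) : ℂ))
        ((-(1/2) : ℂ) * (1 - z) ^ ((-(1/2) : ℂ) - 1) * (-1)) z := by
      have h1 : HasDerivAt (fun z : ℂ => 1 - z) (-1) z := by
        simpa using (hasDerivAt_id z).const_sub 1
      exact h1.cpow_const (hslit z hz)
    have := (hfd z hz).mul hg
    convert this using 1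
    case e'_4 => rfl
    case e'_5 => rfl
    case e'_8 => rfl
    have hsplit : (1 - z) ^ (-(1/2) : ℂ) = (1 - z) ^ (-(3/2) : ℂ) * (1 - z) := by
      have : (-(1/2) : ℂ) = (-(3/2)) + 1 := by norm_num
      rw [this, Complex.cpow_add _ _ (hne z hz), Complex.cpow_one]
    have hexp : ((-(1/2) : ℂ) - 1) = (-(3/2) : ℂ) := by norm_num
    rw [hexp, hsplit]
    have := hODE z hz
    linear_combination (-(1 - z) ^ (-(3/2) : ℂ)) * this
  -- F is constant equal to 1
  have hFz : ∀ z : ℂ, F z = f z * (1 - z) ^ (-(1/2) : ℂ) := fun _ => rfl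
  have hF0 : F 0 = 1 := by
    rw [hFz 0]
    simp only [sub_zero, Complex.one_cpow, mul_one]
    rw [hfz 0]
    rw [tsum_eq_single 0 (by intro m hm; simp [zero_pow hm])]
    simp [bc_zero]
  have hFw : F w = 1 := by
    rw [← hF0]
    have hdiff : DifferentiableOn ℂ F s := fun z hz =>
      ((hFd z hz).differentiableAt).differentiableWithinAt
    have hzero : ∀ z ∈ s, fderivWithin ℂ F s z = 0 := by
      intro z hz
      rw [fderivWithin_of_isOpen hs_open hz]
      have := (hFd z hz).hasFDerivAt.fderiv
      rw [this]
      ext v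
      simp
    exact hs_conv.is_const_of_fderivWithin_eq_zero (𝕜 := ℂ) hdiff hzero hws h0s
  -- conclude
  have hcancel : (1 - w) ^ (-(1/2) : ℂ) * (1 - w) ^ ((1:ℂ)/2) = 1 := by
    rw [← Complex.cpow_add _ _ (hne w hws)]
    norm_num
  have hfw : f w = (1 - w) ^ ((1:ℂ)/2) := by
    have : f w * ((1 - w) ^ (-(1/2) : ℂ) * (1 - w) ^ ((1:ℂ)/2)) = (1 - w) ^ ((1:ℂ)/2) := by
      rw [← mul_assoc]
      rw [hFz w] at hFw
      rw [hFw, one_mul]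
    rwa [hcancel, mul_one] at this
  rw [hfz w] at hfw
  rw [← hfw]
  exact (hSf w hw).hasSum

lemma orth (m : ℤ) : (∫ θ in (-π : ℝ)..π, Complex.exp (Complex.I * m * θ))
    = if m = 0 then (2 * π : ℂ) else 0 := by
  rcases eq_or_ne m 0 with h | h
  · subst h
    simp only [Int.cast_zero, mul_zero, zero_mul, Complex.exp_zero, if_true]
    rw [intervalIntegral.integral_const]
    push_cast
    ring_nf
    norm_num
  · rw [if_neg h]
    have hc : (Complex.I * m) ≠ 0 := by
      apply mul_ne_zero Complex.I_ne_zero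
      exact_mod_cast h
    have heq : (fun θ : ℝ => Complex.exp (Complex.I * m * θ))
        = fun θ : ℝ => Complex.exp ((Complex.I * m) * θ) := by
      funext θ; ring_nf
    rw [heq, integral_exp_mul_complex hc]
    have h1 : Complex.I * m * π = m * (π * Complex.I) := by push_cast; ring
    have h2 : Complex.I * m * (-π : ℝ) = (-m : ℤ) * (π * Complex.I) := by push_cast; ring
    rw [h1, h2, Complex.exp_int_mul, Complex.exp_int_mul, Complex.exp_pi_mul_I]
    have : ((-1 : ℂ) ^ m)⁻¹ = (-1 : ℂ) ^ m := by
      apply inv_eq_of_mul_eq_one_right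
      rw [← mul_zpow]
      norm_num
    rw [zpow_neg, this, sub_self, zero_div]

-- L1
lemma poch_split (N j : ℕ) : (ascPochhammer ℝ (j + N)).eval (-(1/2)) =
    (ascPochhammer ℝ N).eval (-(1/2)) * (ascPochhammer ℝ j).eval ((N : ℝ) - 1/2) := by
  induction j with
  | zero => simp
  | succ j ih =>
    have : j + 1 + N = (j + N) + 1 := by omega
    rw [this, ascPochhammer_succ_eval, ih, ascPochhammer_succ_eval]
    push_cast
    ring

-- L2
lemma factorial_split (N j : ℕ) : (((j + N).factorial : ℝ)) =
    (N.factorial : ℝ) * (ascPochhammer ℝ j).eval ((N : ℝ) + 1) := by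
  induction j with
  | zero => simp
  | succ j ih =>
    have : j + 1 + N = (j + N) + 1 := by omega
    rw [this, Nat.factorial_succ, ascPochhammer_succ_eval]
    push_cast
    rw [ih]
    push_cast
    ring

-- L3
lemma gamma_poch (N : ℕ) : Real.Gamma ((N : ℝ) - 1/2) =
    (-2 * Real.sqrt π) * (ascPochhammer ℝ N).eval (-(1/2)) := by
  induction N with
  | zero =>
    have h := Real.Gamma_add_one (s := -(1/2)) (by norm_num)
    have h2 : (-(1/2) : ℝ) + 1 = 1/2 := by norm_num
    rw [h2, Real.Gamma_one_half_eq] at h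
    simp only [Nat.cast_zero, zero_sub, ascPochhammer_zero, Polynomial.eval_one, mul_one]
    linarith
  | succ N ih =>
    have hne : ((N : ℝ) - 1/2) ≠ 0 := by
      intro h
      have : (N : ℝ) = 1/2 := by linarith
      rcases Nat.eq_zero_or_pos N with h0 | h0
      · rw [h0] at this; norm_num at this
      · have : (1 : ℝ) ≤ (N : ℝ) := by exact_mod_cast h0
        linarith
    have h1 : ((N + 1 : ℕ) : ℝ) - 1/2 = ((N : ℝ) - 1/2) + 1 := by push_cast; ring
    rw [h1, Real.Gamma_add_one hne, ih, ascPochhammer_succ_eval]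
    ring

lemma poch_pos (N j : ℕ) : 0 < (ascPochhammer ℝ j).eval ((N : ℝ) + 1) :=
  ascPochhammer_pos j _ (by positivity)

-- term identity
lemma term_identity (N j : ℕ) : bc j * bc (j + N) =
    -(Real.Gamma ((N : ℝ) - 1/2) / (2 * Real.sqrt π * (N.factorial : ℝ))) *
      ((ascPochhammer ℝ j).eval (-(1/2)) * (ascPochhammer ℝ j).eval ((N : ℝ) - 1/2) /
        (ascPochhammer ℝ j).eval ((N : ℝ) + 1)) / (j.factorial : ℝ) := by
  have hsq : Real.sqrt π ≠ 0 := by positivity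
  have hNf : (N.factorial : ℝ) ≠ 0 := Nat.cast_ne_zero.2 N.factorial_ne_zero
  have hjf : (j.factorial : ℝ) ≠ 0 := Nat.cast_ne_zero.2 j.factorial_ne_zero
  have hp : (ascPochhammer ℝ j).eval ((N : ℝ) + 1) ≠ 0 := ne_of_gt (poch_pos N j)
  rw [gamma_poch, bc, bc, poch_split, factorial_split]
  field_simp

lemma bc_summable_real {x : ℝ} (h0 : 0 ≤ x) (h1 : x < 1) :
    Summable fun m => |bc m| * x ^ m := by
  refine Summable.of_nonneg_of_le (fun m => by positivity) (fun m => ?_)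
    (summable_geometric_of_lt_one h0 h1)
  calc |bc m| * x ^ m ≤ 1 * x ^ m :=
        mul_le_mul_of_nonneg_right (bc_abs m) (by positivity)
    _ = x ^ m := one_mul _

lemma norm_exp_I_int_mul (c : ℤ) (θ : ℝ) : ‖Complex.exp (Complex.I * (c : ℂ) * θ)‖ = 1 := by
  rw [Complex.norm_exp]
  have : (Complex.I * (c : ℂ) * (θ : ℂ)).re = 0 := by
    simp [Complex.mul_re, Complex.mul_im]
  rw [this, Real.exp_zero]

lemma norm_exp_neg_I_mul (θ : ℝ) : ‖Complex.exp (-(Complex.I * θ))‖ = 1 := by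
  rw [Complex.norm_exp]
  have : (-(Complex.I * (θ : ℂ))).re = 0 := by simp [Complex.mul_re]
  rw [this, Real.exp_zero]

lemma norm_exp_I_mul (θ : ℝ) : ‖Complex.exp (Complex.I * θ)‖ = 1 := by
  rw [Complex.norm_exp]
  have : ((Complex.I * (θ : ℂ))).re = 0 := by simp [Complex.mul_re]
  rw [this, Real.exp_zero]

lemma integrand_eq (k : ℝ) (hk : 1 < k) (n : ℤ) (θ : ℝ) :
    Complex.exp (-(Complex.I * n * θ)) *
      (1 - (k : ℂ)⁻¹ * Complex.exp (-(Complex.I * θ))) ^ ((1:ℂ)/2) *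
      (1 - (k : ℂ)⁻¹ * Complex.exp (Complex.I * θ)) ^ ((1:ℂ)/2)
    = ∑' p : ℕ × ℕ, ((bc p.1 * bc p.2 * (k⁻¹) ^ (p.1 + p.2) : ℝ) : ℂ) *
        Complex.exp (Complex.I * (((p.2 : ℤ) - (p.1 : ℤ) - n : ℤ) : ℂ) * θ) := by
  have hk0 : (0:ℝ) < k := lt_trans one_pos hk
  have hq1 : k⁻¹ < 1 := by
    rw [inv_lt_one_iff₀]; right; exact hk
  have hq0 : (0:ℝ) < k⁻¹ := by positivity
  have hkc : (k : ℂ)⁻¹ = ((k⁻¹ : ℝ) : ℂ) := by push_cast; ring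
  set a : ℂ := (k : ℂ)⁻¹ * Complex.exp (-(Complex.I * θ)) with ha_def
  set b : ℂ := (k : ℂ)⁻¹ * Complex.exp (Complex.I * θ) with hb_def
  have hna : ‖a‖ < 1 := by
    rw [ha_def, norm_mul, hkc, Complex.norm_real, Real.norm_eq_abs, abs_of_pos hq0,
      norm_exp_neg_I_mul, mul_one]
    exact hq1
  have hnb : ‖b‖ < 1 := by
    rw [hb_def, norm_mul, hkc, Complex.norm_real, Real.norm_eq_abs, abs_of_pos hq0,
      norm_exp_I_mul, mul_one]
    exact hq1
  have hs1 := (bc_hasSum hna).tsum_eq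
  have hs2 := (bc_hasSum hnb).tsum_eq
  rw [← hs1, ← hs2, mul_assoc,
    tsum_mul_tsum_of_summable_norm (bc_summable hna) (bc_summable hnb), ← tsum_mul_left]
  apply tsum_congr
  intro p
  obtain ⟨j, l⟩ := p
  simp only
  have hexp : Complex.exp (Complex.I * (((l : ℤ) - (j : ℤ) - n : ℤ) : ℂ) * θ)
      = Complex.exp (-(Complex.I * n * θ)) * (Complex.exp ((j : ℂ) * (-(Complex.I * θ))) *
          Complex.exp ((l : ℂ) * (Complex.I * θ))) := by
    rw [← Complex.exp_add, ← Complex.exp_add]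
    congr 1
    push_cast
    ring
  rw [ha_def, hb_def, mul_pow, mul_pow, ← Complex.exp_nat_mul, ← Complex.exp_nat_mul, hexp, hkc]
  push_cast
  ring

lemma summable_pairs {x : ℝ} (h0 : 0 ≤ x) (h1 : x < 1) :
    Summable fun p : ℕ × ℕ => |bc p.1 * bc p.2 * x ^ (p.1 + p.2)| := by
  have hf : Summable fun m : ℕ => ‖|bc m| * x ^ m‖ := by
    apply Summable.congr (bc_summable_real h0 h1)
    intro m
    have hnn : (0:ℝ) ≤ |bc m| * x ^ m := by positivity
    rw [Real.norm_eq_abs, abs_of_nonneg hnn]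
  have h2 := summable_mul_of_summable_norm hf hf
  apply Summable.congr h2
  intro p
  rw [abs_mul, abs_mul, abs_pow, abs_of_nonneg h0, pow_add]
  ring

lemma integral_exchange (k : ℝ) (hk : 1 < k) (n : ℤ) :
    (∫ θ in (-π : ℝ)..π, ∑' p : ℕ × ℕ, ((bc p.1 * bc p.2 * (k⁻¹) ^ (p.1 + p.2) : ℝ) : ℂ) *
        Complex.exp (Complex.I * (((p.2 : ℤ) - (p.1 : ℤ) - n : ℤ) : ℂ) * θ))
    = ∑' p : ℕ × ℕ, ((bc p.1 * bc p.2 * (k⁻¹) ^ (p.1 + p.2) : ℝ) : ℂ) *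
        (if ((p.2 : ℤ) - (p.1 : ℤ) - n : ℤ) = 0 then (2 * π : ℂ) else 0) := by
  have hk0 : (0:ℝ) < k := lt_trans one_pos hk
  have hq1 : k⁻¹ < 1 := by rw [inv_lt_one_iff₀]; right; exact hk
  have hq0 : (0:ℝ) < k⁻¹ := by positivity
  have hpi : (-π : ℝ) ≤ π := by linarith [pi_pos]
  set T : ℕ × ℕ → ℝ → ℂ := fun p θ =>
    ((bc p.1 * bc p.2 * (k⁻¹) ^ (p.1 + p.2) : ℝ) : ℂ) *
      Complex.exp (Complex.I * (((p.2 : ℤ) - (p.1 : ℤ) - n : ℤ) : ℂ) * θ) with hT_def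
  have hTnorm : ∀ p θ, ‖T p θ‖ = |bc p.1 * bc p.2 * (k⁻¹) ^ (p.1 + p.2)| := by
    intro p θ
    rw [hT_def]
    simp only
    rw [norm_mul, norm_exp_I_int_mul, mul_one, Complex.norm_real, Real.norm_eq_abs]
  have hTcont : ∀ p : ℕ × ℕ, Continuous (T p) := by
    intro p
    apply Continuous.mul continuous_const
    exact Complex.continuous_exp.comp (continuous_const.mul Complex.continuous_ofReal)
  rw [integral_of_le hpi]
  rw [MeasureTheory.integral_tsum]
  · apply tsum_congr
    intro p
    have e1 : ∫ θ in Set.Ioc (-π : ℝ) π, T p θ = ∫ θ in (-π : ℝ)..π, T p θ :=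
      (integral_of_le hpi).symm
    rw [e1]
    have e2 : (∫ θ in (-π : ℝ)..π, T p θ)
        = ((bc p.1 * bc p.2 * (k⁻¹) ^ (p.1 + p.2) : ℝ) : ℂ) *
          ∫ θ in (-π : ℝ)..π, Complex.exp (Complex.I * (((p.2 : ℤ) - (p.1 : ℤ) - n : ℤ) : ℂ) * θ) := by
      rw [hT_def]
      exact intervalIntegral.integral_const_mul _ _
    rw [e2, orth]
  · exact fun p => (hTcont p).aestronglyMeasurable
  · have hB : (∑' p : ℕ × ℕ, ENNReal.ofReal (|bc p.1 * bc p.2 * (k⁻¹) ^ (p.1 + p.2)|) *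
        MeasureTheory.volume (Set.Ioc (-π : ℝ) π)) ≠ ⊤ := by
      rw [ENNReal.tsum_mul_right]
      apply ENNReal.mul_ne_top _ (by simp [Real.volume_Ioc])
      rw [← ENNReal.ofReal_tsum_of_nonneg (fun p => abs_nonneg _)
        (summable_pairs (le_of_lt hq0) hq1)]
      exact ENNReal.ofReal_ne_top
    refine ne_top_of_le_ne_top hB (ENNReal.tsum_le_tsum fun p => ?_)
    have hpt : ∀ θ : ℝ, (‖T p θ‖₊ : ℝ≥0∞) = ENNReal.ofReal (|bc p.1 * bc p.2 * (k⁻¹) ^ (p.1 + p.2)|) := by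
      intro θ
      rw [← enorm_eq_nnnorm, ← ofReal_norm, hTnorm]
    apply le_of_eq
    calc ∫⁻ θ in Set.Ioc (-π : ℝ) π, (‖T p θ‖₊ : ℝ≥0∞)
        = ∫⁻ _ in Set.Ioc (-π : ℝ) π, ENNReal.ofReal (|bc p.1 * bc p.2 * (k⁻¹) ^ (p.1 + p.2)|) := by
          exact MeasureTheory.lintegral_congr fun θ => hpt θ
      _ = ENNReal.ofReal (|bc p.1 * bc p.2 * (k⁻¹) ^ (p.1 + p.2)|) *
            MeasureTheory.volume (Set.Ioc (-π : ℝ) π) := by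
          rw [MeasureTheory.setLIntegral_const]

lemma bc_ne_zero (m : ℕ) : bc m ≠ 0 := by
  induction m with
  | zero => simp [bc]
  | succ m ih =>
    have h := bc_rec m
    intro h0
    rw [h0, mul_zero] at h
    have h1 : ((m : ℝ) - 1/2) ≠ 0 := by
      have : (0:ℝ) ≤ (m:ℝ) := Nat.cast_nonneg m
      intro he
      rcases Nat.eq_zero_or_pos m with h2 | h2
      · rw [h2] at he; norm_num at he
      · have : (1:ℝ) ≤ (m:ℝ) := by exact_mod_cast h2
        linarith
    exact ih (by
      have := mul_eq_zero.1 h.symm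
      tauto)

end AuxLemmas

/-- The Fourier coefficients of the reciprocal scattering function
`1/S(z) = (1-k⁻¹z⁻¹)^{1/2}(1-k⁻¹z)^{1/2}`:
`F̄_n = -[Γ(|n|-1/2)/(2√π |n|!)] k^{-|n|} ₂F₁(-1/2,|n|-1/2;|n|+1;k^{-2})` for all `n ∈ ℤ`. -/
theorem reciprocal_scattering_fourier_coeff (k : ℝ) (hk : 1 < k) (n : ℤ) :
    (1 / (2 * (π : ℂ))) * ∫ θ in (-π)..π,
        Complex.exp (-(Complex.I * n * θ)) *
          (1 - (k : ℂ)⁻¹ * Complex.exp (-(Complex.I * θ))) ^ ((1 : ℂ) / 2) *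
          (1 - (k : ℂ)⁻¹ * Complex.exp (Complex.I * θ)) ^ ((1 : ℂ) / 2)
      = ((-(Real.Gamma ((n.natAbs : ℝ) - 1/2) / (2 * Real.sqrt π * (n.natAbs.factorial : ℝ))) *
          k ^ (-|n|) *
          gaussHyp (-(1/2)) ((n.natAbs : ℝ) - 1/2) ((n.natAbs : ℝ) + 1) (k ^ (-2 : ℤ)) : ℝ) : ℂ) := by
  have hk0 : (0:ℝ) < k := lt_trans one_pos hk
  have hq1 : k⁻¹ < 1 := by rw [inv_lt_one_iff₀]; right; exact hk
  have hq0 : (0:ℝ) < k⁻¹ := by positivity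
  set N : ℕ := n.natAbs with hN_def
  -- step 1: expand the integrand and exchange
  rw [intervalIntegral.integral_congr (g := fun θ : ℝ =>
    ∑' p : ℕ × ℕ, ((bc p.1 * bc p.2 * (k⁻¹) ^ (p.1 + p.2) : ℝ) : ℂ) *
        Complex.exp (Complex.I * (((p.2 : ℤ) - (p.1 : ℤ) - n : ℤ) : ℂ) * θ))
    (fun θ _ => integrand_eq k hk n θ)]
  rw [integral_exchange k hk n]
  -- step 2: bijection onto the diagonal
  have hbij : (∑' p : ℕ × ℕ, ((bc p.1 * bc p.2 * (k⁻¹) ^ (p.1 + p.2) : ℝ) : ℂ) *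
        (if ((p.2 : ℤ) - (p.1 : ℤ) - n : ℤ) = 0 then (2 * π : ℂ) else 0))
      = ∑' m : ℕ, ((bc m * bc (m + N) * (k⁻¹) ^ (2*m + N) : ℝ) : ℂ) * (2 * π : ℂ) := by
    apply tsum_eq_tsum_of_ne_zero_bij
      (i := fun m => ((m : ℕ) + (-n).toNat, (m : ℕ) + n.toNat))
    · intro x y hxy
      exact Subtype.ext (by simpa using congrArg Prod.fst hxy)
    · intro p hp
      have hp' : ((bc p.1 * bc p.2 * (k⁻¹) ^ (p.1 + p.2) : ℝ) : ℂ) *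
          (if ((p.2 : ℤ) - (p.1 : ℤ) - n : ℤ) = 0 then (2 * π : ℂ) else 0) ≠ 0 :=
        Function.mem_support.mp hp
      have hcond : ((p.2 : ℤ) - (p.1 : ℤ) - n : ℤ) = 0 := by
        by_contra hc
        rw [if_neg hc, mul_zero] at hp'
        exact hp' rfl
      have hg : ((bc (min p.1 p.2) * bc (min p.1 p.2 + N) * (k⁻¹) ^ (2 * min p.1 p.2 + N) : ℝ) : ℂ)
          * (2 * π : ℂ) ≠ 0 := by
        apply mul_ne_zero
        · rw [Complex.ofReal_ne_zero]
          apply mul_ne_zero (mul_ne_zero (bc_ne_zero _) (bc_ne_zero _))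
          positivity
        · simp [Real.pi_ne_zero]
      refine ⟨⟨min p.1 p.2, hg⟩, ?_⟩
      simp only
      have h1 : min p.1 p.2 + (-n).toNat = p.1 := by omega
      have h2 : min p.1 p.2 + n.toNat = p.2 := by omega
      rw [h1, h2]
    · intro x
      obtain ⟨m, hm⟩ := x
      simp only
      have hcond : (((m + n.toNat : ℕ) : ℤ) - ((m + (-n).toNat : ℕ) : ℤ) - n : ℤ) = 0 := by
        push_cast; omega
      rw [if_pos hcond]
      congr 2
      have hexp : (m + (-n).toNat) + (m + n.toNat) = 2*m + N := by
        have : N = n.natAbs := hN_def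
        omega
      rw [hexp]
      rcases le_total 0 n with h | h
      · have e1 : (-n).toNat = 0 := by omega
        have e2 : n.toNat = N := by have : N = n.natAbs := hN_def; omega
        rw [e1, e2, add_zero]
      · have e1 : n.toNat = 0 := by omega
        have e2 : (-n).toNat = N := by have : N = n.natAbs := hN_def; omega
        rw [e1, e2, add_zero]
        ring
  rw [hbij, tsum_mul_right]
  -- step 3: cancel the 2π and identify with the hypergeometric series
  have hπ : (2 * π : ℂ) ≠ 0 := by
    simp [Real.pi_ne_zero]
  rw [← mul_assoc, mul_comm (1 / (2 * (π:ℂ))), mul_assoc]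
  rw [show (1 / (2 * (π:ℂ))) * (2 * π : ℂ) = 1 by field_simp, mul_one]
  -- now both sides are real casts
  rw [← Complex.ofReal_tsum]
  rw [Complex.ofReal_inj]
  -- real identity
  have habs : |n| = (N : ℤ) := Int.abs_eq_natAbs n
  have hkN : k ^ (-|n|) = (k⁻¹) ^ N := by
    rw [habs, zpow_neg, zpow_natCast, inv_pow]
  have ht : k ^ (-2 : ℤ) = (k⁻¹) ^ 2 := by
    rw [zpow_neg, inv_pow]
    norm_cast
  rw [hkN, ht, gaussHyp, ← tsum_mul_left]
  apply tsum_congr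
  intro j
  have hti := term_identity N j
  have hq : (k⁻¹) ^ (2*j + N) = ((k⁻¹)^2) ^ j * (k⁻¹) ^ N := by
    rw [pow_add, pow_mul]
  rw [hq, hti]
  ring
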